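/- For every positive integer n, the sine Fourier coefficient of log Γ on (0,1) equals log n/(π n) + η/n; that is, 2·∫_0^1 log Γ(x) · sin(2π n x) dx = log n/(π n) + η/n. -/

import Mathlib

open Real Filter Finset Topology MeasureTheory intervalIntegral

lemma myProd_reindex (n m : ℕ) (f : ℕ → ℝ) :
    ∏ i ∈ Finset.range (n * m), f i
      = ∏ k ∈ Finset.range n, ∏ j ∈ Finset.range m, f (k + j * n) := by
  rcases Nat.eq_zero_or_pos n with rfl | hn
  · simp
  rw [← Finset.prod_product']
  apply Finset.prod_nbij' (fun i => (i % n, i / n)) (fun p => p.1 + p.2 * n)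
  · intro i hi
    simp only [Finset.mem_range] at hi
    simp only [Finset.mem_product, Finset.mem_range]
    exact ⟨Nat.mod_lt _ hn, Nat.div_lt_of_lt_mul (by omega)⟩
  · intro p hp
    simp only [Finset.mem_product, Finset.mem_range] at hp
    simp only [Finset.mem_range]
    calc p.1 + p.2 * n < n + p.2 * n := by omega
      _ = (p.2 + 1) * n := by ring
      _ ≤ m * n := Nat.mul_le_mul_right n (Nat.succ_le_of_lt hp.2)
      _ = n * m := Nat.mul_comm m n
  · intro i hi
    simp [Nat.mod_add_div']
  · intro p hp
    simp only [Finset.mem_product, Finset.mem_range] at hp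
    have h1 : (p.1 + p.2 * n) % n = p.1 := by
      rw [Nat.add_mul_mod_self_right]; exact Nat.mod_eq_of_lt hp.1
    have h2 : (p.1 + p.2 * n) / n = p.2 := by
      rw [Nat.add_mul_div_right _ _ hn, Nat.div_eq_of_lt hp.1]; omega
    simp [h1, h2]
  · intro i hi
    simp [Nat.mod_add_div']

lemma myKey (n m : ℕ) (hn : 0 < n) (hm : 0 < m) (t : ℝ) (ht : 0 < t) :
    (∏ k ∈ Finset.range n, Real.GammaSeq ((t + k)/n) m)
      = ((m:ℝ)^(t + ((n:ℝ)-1)/2) * ((m.factorial:ℝ))^n * ((n:ℝ))^(n*(m+1)))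
        * (∏ i ∈ Finset.range (n*(m+1)), (t + i))⁻¹ := by
  have hn' : (0:ℝ) < n := by exact_mod_cast hn
  have hm' : (0:ℝ) < m := by exact_mod_cast hm
  unfold Real.GammaSeq
  rw [Finset.prod_div_distrib, Finset.prod_mul_distrib, Finset.prod_const]
  have hA : ∏ k ∈ Finset.range n, (m:ℝ) ^ ((t + k)/n)
      = (m:ℝ) ^ (t + ((n:ℝ)-1)/2) := by
    rw [← Real.rpow_sum_of_pos hm']
    congr 1
    have hid : ∀ N : ℕ, (∑ k ∈ Finset.range N, (k:ℝ)) = N * ((N:ℝ) - 1) / 2 := by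
      intro N
      induction N with
      | zero => simp
      | succ p ih => rw [Finset.sum_range_succ, ih]; push_cast; ring
    rw [← Finset.sum_div, Finset.sum_add_distrib, Finset.sum_const, Finset.card_range, hid n]
    field_simp
    ring
  rw [hA]
  have hB : ∏ k ∈ Finset.range n, ∏ j ∈ Finset.range (m+1), ((t + k)/n + j)
      = (∏ i ∈ Finset.range (n*(m+1)), (t + i)) * ((n:ℝ)⁻¹)^(n*(m+1)) := by
    have step : ∀ k ∈ Finset.range n, ∏ j ∈ Finset.range (m+1), ((t + k)/n + j)
        = (∏ j ∈ Finset.range (m+1), (t + ((k + j*n : ℕ):ℝ))) * ((n:ℝ)⁻¹)^(m+1) := by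
      intro k _
      rw [show ((n:ℝ)⁻¹)^(m+1) = ∏ _j ∈ Finset.range (m+1), (n:ℝ)⁻¹ by simp,
        ← Finset.prod_mul_distrib]
      apply Finset.prod_congr rfl
      intro j _
      push_cast
      field_simp
      ring
    rw [Finset.prod_congr rfl step, Finset.prod_mul_distrib, Finset.prod_const,
      Finset.card_range, ← pow_mul, mul_comm (m+1) n,
      myProd_reindex n (m+1) (fun i => t + i)]
  rw [hB]
  have hD : (∏ i ∈ Finset.range (n*(m+1)), (t + (i:ℝ))) ≠ 0 :=
    ne_of_gt (Finset.prod_pos fun i _ => by positivity)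
  have hninv : ((n:ℝ)⁻¹)^(n*(m+1)) ≠ 0 := by positivity
  field_simp
  rw [Finset.card_range, one_div, inv_pow]
  field_simp

lemma myGaussLim (n : ℕ) (hn : 0 < n) (s : ℝ) (hs : 0 < s) :
    Filter.Tendsto
      (fun m : ℕ => (m:ℝ)^(((n:ℝ)-1)/2) * ((m.factorial:ℝ))^n * ((n:ℝ))^(n*(m+1))
        / (((n*(m+1)-1).factorial : ℕ) : ℝ))
      Filter.atTop
      (𝓝 ((∏ k ∈ Finset.range n, Real.Gamma ((s + k)/n)) * (n:ℝ)^s / Real.Gamma s)) := by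
  have hn' : (0:ℝ) < n := by exact_mod_cast hn
  have hΓ : 0 < Real.Gamma s := Real.Gamma_pos_of_pos hs
  -- the auxiliary sequence
  set em : ℕ → ℝ := fun m =>
    (∏ k ∈ Finset.range n, Real.GammaSeq ((s + k)/n) m)
      / Real.GammaSeq s (n*(m+1)-1) * ((((n*(m+1)-1 : ℕ)):ℝ) / (m:ℝ))^s with hem
  have hMtop : Filter.Tendsto (fun m : ℕ => n*(m+1)-1) Filter.atTop Filter.atTop := by
    apply tendsto_atTop_mono (fun m => ?_) tendsto_id
    have : 1*(m+1) ≤ n*(m+1) := Nat.mul_le_mul_right _ hn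
    simp only [id_eq]
    omega
  have t2 : Filter.Tendsto (fun m : ℕ => Real.GammaSeq s (n*(m+1)-1)) Filter.atTop
      (𝓝 (Real.Gamma s)) := (Real.GammaSeq_tendsto_Gamma s).comp hMtop
  have t1 : Filter.Tendsto (fun m : ℕ => ∏ k ∈ Finset.range n, Real.GammaSeq ((s + k)/n) m)
      Filter.atTop (𝓝 (∏ k ∈ Finset.range n, Real.Gamma ((s + k)/n))) :=
    tendsto_finset_prod _ (fun k _ => Real.GammaSeq_tendsto_Gamma _)
  have tq : Filter.Tendsto (fun m : ℕ => ((((n*(m+1)-1 : ℕ)):ℝ) / (m:ℝ))^s)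
      Filter.atTop (𝓝 ((n:ℝ)^s)) := by
    have inner : Filter.Tendsto (fun m : ℕ => (((n*(m+1)-1 : ℕ)):ℝ) / (m:ℝ))
        Filter.atTop (𝓝 (n:ℝ)) := by
      have h0 : Filter.Tendsto (fun m : ℕ => (n:ℝ) + ((n:ℝ)-1) / (m:ℝ))
          Filter.atTop (𝓝 ((n:ℝ) + 0)) :=
        tendsto_const_nhds.add (tendsto_const_div_atTop_nhds_zero_nat _)
      rw [add_zero] at h0
      apply h0.congr'
      filter_upwards [Filter.eventually_ge_atTop 1] with m hm
      have hm' : (0:ℝ) < m := by exact_mod_cast hm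
      have hcast : (((n*(m+1)-1 : ℕ)):ℝ) = (n:ℝ)*(m+1) - 1 := by
        have h1 : 1 ≤ n*(m+1) := Nat.mul_pos hn (Nat.succ_pos m)
        push_cast [Nat.cast_sub h1]
        ring
      rw [hcast]
      field_simp
      ring
    exact ((Real.continuousAt_rpow_const _ s (Or.inl (ne_of_gt hn'))).tendsto).comp inner
  have hemlim : Filter.Tendsto em Filter.atTop
      (𝓝 ((∏ k ∈ Finset.range n, Real.Gamma ((s + k)/n)) * (n:ℝ)^s / Real.Gamma s)) := by
    have := (t1.div t2 (ne_of_gt hΓ)).mul tq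
    rw [mul_div_right_comm]
    exact this
  apply hemlim.congr'
  filter_upwards [Filter.eventually_ge_atTop 1] with m hm
  have hm0 : (0:ℝ) < m := by exact_mod_cast hm
  have hMpos : 0 < n*(m+1)-1 := by
    have : 1*(m+1) ≤ n*(m+1) := Nat.mul_le_mul_right _ hn
    omega
  have hM' : (0:ℝ) < ((n*(m+1)-1 : ℕ) : ℝ) := by exact_mod_cast hMpos
  have hsucc : (n*(m+1)-1) + 1 = n*(m+1) := by omega
  have hGS : Real.GammaSeq s (n*(m+1)-1)
      = (((n*(m+1)-1 : ℕ)):ℝ)^s * (((n*(m+1)-1).factorial : ℕ):ℝ)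
        / ∏ i ∈ Finset.range (n*(m+1)), (s + i) := by
    unfold Real.GammaSeq
    rw [hsucc]
  have hD : (0:ℝ) < ∏ i ∈ Finset.range (n*(m+1)), (s + (i:ℝ)) :=
    Finset.prod_pos fun i _ => by positivity
  rw [hem]
  simp only
  rw [hGS, myKey n m hn hm s hs, Real.div_rpow hM'.le hm0.le, Real.rpow_add hm0]
  set A : ℝ := (((n*(m+1)-1 : ℕ)):ℝ) with hA
  set F : ℝ := (((n*(m+1)-1).factorial : ℕ):ℝ) with hF
  set D : ℝ := ∏ i ∈ Finset.range (n*(m+1)), (s + (i:ℝ)) with hDdef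
  have e1 : ((m:ℝ))^s ≠ 0 := by positivity
  have e3 : A^s ≠ 0 := by positivity
  have e4 : F ≠ 0 := by
    rw [hF]; exact_mod_cast (n*(m+1)-1).factorial_ne_zero
  field_simp

lemma myGaussSum (n : ℕ) (hn : 0 < n) :
    ∃ c : ℝ, ∀ t : ℝ, 0 < t →
      ∑ k ∈ Finset.range n, Real.log (Real.Gamma ((t + k)/n))
        = Real.log (Real.Gamma t) - t * Real.log n + c := by
  have hn' : (0:ℝ) < n := by exact_mod_cast hn
  set K : ℝ := (∏ k ∈ Finset.range n, Real.Gamma (((1:ℝ) + k)/n)) * (n:ℝ)^(1:ℝ)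
      / Real.Gamma 1 with hK
  have hKpos : 0 < K := by
    rw [hK]
    apply div_pos
    · exact mul_pos (Finset.prod_pos fun k _ => Real.Gamma_pos_of_pos (by positivity))
        (Real.rpow_pos_of_pos hn' 1)
    · exact Real.Gamma_pos_of_pos one_pos
  refine ⟨Real.log K, fun t ht => ?_⟩
  have hPt : (∏ k ∈ Finset.range n, Real.Gamma ((t + k)/n)) * (n:ℝ)^t / Real.Gamma t = K :=
    tendsto_nhds_unique (myGaussLim n hn t ht) (myGaussLim n hn 1 one_pos)
  have hΓt : 0 < Real.Gamma t := Real.Gamma_pos_of_pos ht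
  have hprod : (∏ k ∈ Finset.range n, Real.Gamma ((t + k)/n))
      = K * Real.Gamma t / (n:ℝ)^t := by
    have hrp : (0:ℝ) < (n:ℝ)^t := Real.rpow_pos_of_pos hn' t
    field_simp at hPt ⊢
    linarith [hPt]
  have hlog : ∑ k ∈ Finset.range n, Real.log (Real.Gamma ((t + k)/n))
      = Real.log (∏ k ∈ Finset.range n, Real.Gamma ((t + k)/n)) := by
    rw [Real.log_prod]
    intro k _
    exact ne_of_gt (Real.Gamma_pos_of_pos (by positivity))
  rw [hlog, hprod, Real.log_div (by positivity) (by positivity),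
    Real.log_mul (ne_of_gt hKpos) (ne_of_gt hΓt), Real.log_rpow hn']
  ring

lemma myLog01 : IntervalIntegrable Real.log MeasureTheory.volume 0 1 := by
  have hderiv : ∀ x ∈ Set.Ioo (0:ℝ) 1,
      HasDerivAt (fun y : ℝ => y - y * Real.log y) (-Real.log x) x := by
    intro x hx
    have h1 : HasDerivAt (fun y : ℝ => y * Real.log y) (Real.log x + 1) x := by
      have := (hasDerivAt_id x).mul (Real.hasDerivAt_log (ne_of_gt hx.1))
      refine this.congr_deriv ?_
      field_simp [ne_of_gt hx.1]
      simp only [id_eq]; ring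
    have := (hasDerivAt_id x).sub h1
    refine this.congr_deriv ?_
    ring
  have hcont : ContinuousOn (fun y : ℝ => y - y * Real.log y) (Set.Icc 0 1) :=
    (continuous_id.sub Real.continuous_mul_log).continuousOn
  have h := intervalIntegral.integrableOn_deriv_of_nonneg hcont hderiv
    (fun x hx => neg_nonneg.mpr (Real.log_nonpos hx.1.le hx.2.le))
  rw [intervalIntegrable_iff, Set.uIoc_of_le zero_le_one]
  have := h.neg
  apply this.congr
  filter_upwards with x
  simp

lemma myLogGammaContOn : ContinuousOn (fun x => Real.log (Real.Gamma x)) (Set.Ioi (0:ℝ)) := by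
  intro x hx
  have hΓ : 0 < Real.Gamma x := Real.Gamma_pos_of_pos hx
  have hd : DifferentiableAt ℝ Real.Gamma x := by
    apply Real.differentiableAt_Gamma
    intro m h
    rw [h] at hx
    exact (neg_nonpos.mpr (Nat.cast_nonneg (α := ℝ) m)).not_gt hx
  exact ((Real.continuousAt_log (ne_of_gt hΓ)).comp hd.continuousAt).continuousWithinAt

lemma myII (n : ℕ) (hn : 0 < n) (k : ℕ) (φ : ℝ → ℝ) (hφ : Continuous φ) :
    IntervalIntegrable (fun t => Real.log (Real.Gamma ((t + k)/n)) * φ t)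
      MeasureTheory.volume 0 1 := by
  have hn' : (0:ℝ) < n := by exact_mod_cast hn
  -- the regularized part
  have hψ : ContinuousOn
      (fun t => Real.log (Real.Gamma ((t + k)/n + 1)) + Real.log n) (Set.uIcc (0:ℝ) 1) := by
    apply ContinuousOn.add _ continuousOn_const
    apply myLogGammaContOn.comp
      (Continuous.continuousOn (by continuity))
    intro t ht
    rw [Set.uIcc_of_le zero_le_one] at ht
    have : (0:ℝ) ≤ (t + k)/n :=
      div_nonneg (by linarith [ht.1, (Nat.cast_nonneg k : (0:ℝ) ≤ k)]) hn'.le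
    simp only [Set.mem_Ioi]
    linarith
  have hψI : IntervalIntegrable
      (fun t => Real.log (Real.Gamma ((t + k)/n + 1)) + Real.log n)
      MeasureTheory.volume 0 1 := hψ.intervalIntegrable
  have hlogk : IntervalIntegrable (fun t => Real.log (t + k)) MeasureTheory.volume 0 1 := by
    rcases Nat.eq_zero_or_pos k with rfl | hk
    · simpa using myLog01
    · apply ContinuousOn.intervalIntegrable
      apply Real.continuousOn_log.comp (by fun_prop)
      intro t ht
      rw [Set.uIcc_of_le zero_le_one] at ht
      have hk' : (1:ℝ) ≤ k := by exact_mod_cast hk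
      simp only [Set.mem_compl_iff, Set.mem_singleton_iff]
      intro h; nlinarith [ht.1]
  have htot : IntervalIntegrable
      (fun t => (Real.log (Real.Gamma ((t + k)/n + 1)) + Real.log n - Real.log (t + k)) * φ t)
      MeasureTheory.volume 0 1 :=
    (hψI.sub hlogk).mul_continuousOn hφ.continuousOn
  rw [intervalIntegrable_iff, Set.uIoc_of_le zero_le_one] at htot ⊢
  apply htot.congr_fun _ measurableSet_Ioc
  intro t ht
  simp only
  congr 1
  have htk : (0:ℝ) < t + k := by
    have : (0:ℝ) ≤ k := Nat.cast_nonneg k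
    linarith [ht.1]
  have harg : (0:ℝ) < (t + k)/n := by positivity
  have hΓ : 0 < Real.Gamma ((t + k)/n) := Real.Gamma_pos_of_pos harg
  rw [Real.Gamma_add_one (ne_of_gt harg), Real.log_mul (ne_of_gt harg) (ne_of_gt hΓ),
    Real.log_div (ne_of_gt htk) (ne_of_gt hn')]
  ring

lemma mySin01 : ∫ t in (0:ℝ)..1, Real.sin (2 * π * t) = 0 := by
  have h2π : (2 * π : ℝ) ≠ 0 := by positivity
  rw [show (fun t : ℝ => Real.sin (2 * π * t)) = fun t : ℝ => Real.sin (2 * π * t) from rfl]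
  rw [intervalIntegral.integral_comp_mul_left Real.sin h2π]
  simp [Real.cos_two_pi]

lemma myTSin01 : ∫ t in (0:ℝ)..1, t * Real.sin (2 * π * t) = -(1 / (2 * π)) := by
  have hπ : (π : ℝ) ≠ 0 := Real.pi_ne_zero
  have h2π : (2 * π : ℝ) ≠ 0 := by positivity
  have hder : ∀ t ∈ Set.uIcc (0:ℝ) 1,
      HasDerivAt (fun t : ℝ => -(t * Real.cos (2 * π * t)) / (2 * π)
        + Real.sin (2 * π * t) / (2 * π) ^ 2) (t * Real.sin (2 * π * t)) t := by
    intro t _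
    have hlin : HasDerivAt (fun t : ℝ => 2 * π * t) (2 * π) t := by
      simpa using (hasDerivAt_id t).const_mul (2 * π)
    have hcos : HasDerivAt (fun t : ℝ => Real.cos (2 * π * t))
        (-Real.sin (2 * π * t) * (2 * π)) t := (Real.hasDerivAt_cos _).comp t hlin
    have hsin : HasDerivAt (fun t : ℝ => Real.sin (2 * π * t))
        (Real.cos (2 * π * t) * (2 * π)) t := (Real.hasDerivAt_sin _).comp t hlin
    have h1 : HasDerivAt (fun t : ℝ => -(t * Real.cos (2 * π * t)) / (2 * π))
        (-(1 * Real.cos (2 * π * t) + t * (-Real.sin (2 * π * t) * (2 * π))) / (2 * π)) t :=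
      (((hasDerivAt_id t).mul hcos).neg).div_const _
    have h2 := (hsin.div_const ((2 * π) ^ 2))
    have := h1.add h2
    refine this.congr_deriv ?_
    field_simp
    ring
  have hcont : IntervalIntegrable (fun t : ℝ => t * Real.sin (2 * π * t))
      MeasureTheory.volume 0 1 := (by continuity : Continuous fun t : ℝ => t * Real.sin (2 * π * t)).intervalIntegrable _ _
  rw [intervalIntegral.integral_eq_sub_of_hasDerivAt hder hcont]
  simp [Real.cos_two_pi, Real.sin_two_pi]
  field_simp

/-- The constant `η := 2·∫_0^1 log Γ(x) · sin(2π x) dx`. -/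
noncomputable def fourierEta : ℝ :=
  2 * ∫ x in (0:ℝ)..1, Real.log (Real.Gamma x) * Real.sin (2 * π * x)

/-- The sine Fourier coefficients of `log Γ` on `(0,1)`:
`2·∫_0^1 log Γ(x)·sin(2πnx) dx = log n/(πn) + η/n` for every positive integer `n`. -/
theorem logGamma_sin_fourier_coeff (n : ℕ) (hn : 0 < n) :
    2 * ∫ x in (0:ℝ)..1, Real.log (Real.Gamma x) * Real.sin (2 * π * n * x)
      = Real.log n / (π * n) + fourierEta / n := by
  have hn' : (0:ℝ) < n := by exact_mod_cast hn
  have hπ : (0:ℝ) < π := Real.pi_pos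
  set f : ℝ → ℝ := fun x => Real.log (Real.Gamma x) * Real.sin (2 * π * n * x) with hf
  -- integrability of f on [0,1]
  have cont1 : Continuous fun x : ℝ => Real.sin (2 * π * (n:ℝ) * x) :=
    Real.continuous_sin.comp (continuous_const.mul continuous_id)
  have cont2 : Continuous fun t : ℝ => Real.sin (2 * π * t) :=
    Real.continuous_sin.comp (continuous_const.mul continuous_id)
  have hfI : IntervalIntegrable f MeasureTheory.volume 0 1 := by
    have := myII 1 one_pos 0 (fun x => Real.sin (2 * π * (n:ℝ) * x)) cont1
    simpa using this
  -- integrability on subintervals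
  have hint : ∀ k, k < n → IntervalIntegrable f MeasureTheory.volume
      ((k:ℝ)/n) (((k+1:ℕ):ℝ)/n) := by
    intro k hk
    apply hfI.mono_set
    rw [Set.uIcc_of_le zero_le_one,
      Set.uIcc_of_le ((div_le_div_iff_of_pos_right hn').mpr (by exact_mod_cast Nat.le_succ k))]
    apply Set.Icc_subset_Icc
    · positivity
    · rw [div_le_one hn']
      exact_mod_cast hk
  -- split into adjacent intervals
  have adj := intervalIntegral.sum_integral_adjacent_intervals
      (a := fun k : ℕ => (k:ℝ)/n) (μ := MeasureTheory.volume) (f := f) (n := n)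
      (fun k hk => hint k hk)
  simp only [Nat.cast_zero, zero_div, div_self hn'.ne'] at adj
  -- per piece substitution
  have piece : ∀ k : ℕ, ∫ x in ((k:ℝ)/n)..(((k+1:ℕ):ℝ)/n), f x
      = (n:ℝ)⁻¹ * ∫ t in (0:ℝ)..1,
          Real.log (Real.Gamma ((t + k)/n)) * Real.sin (2 * π * t) := by
    intro k
    have h := intervalIntegral.integral_comp_mul_add (a := (0:ℝ)) (b := 1) f
      (inv_ne_zero hn'.ne') ((k:ℝ)/n)
    have e0 : (n:ℝ)⁻¹ * 0 + k/n = (k:ℝ)/n := by ring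
    have e1 : (n:ℝ)⁻¹ * 1 + k/n = ((k+1:ℕ):ℝ)/n := by push_cast; field_simp; ring
    rw [e0, e1] at h
    have heq : (fun t : ℝ => f ((n:ℝ)⁻¹ * t + k/n))
        = fun t : ℝ => Real.log (Real.Gamma ((t + k)/n)) * Real.sin (2 * π * t) := by
      funext t
      have e2 : (n:ℝ)⁻¹ * t + k/n = (t + k)/n := by
        rw [inv_mul_eq_div, ← add_div]
      have e3 : 2 * π * n * ((t + k)/n) = 2 * π * t + k * (2 * π) := by
        field_simp
      rw [hf]
      simp only
      rw [e2, e3, Real.sin_add_nat_mul_two_pi]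
    rw [heq] at h
    rw [h, inv_inv, smul_eq_mul, ← mul_assoc, inv_mul_cancel₀ hn'.ne', one_mul]
  -- sum of pieces
  have hsum : ∑ k ∈ Finset.range n, ∫ x in ((k:ℝ)/n)..(((k+1:ℕ):ℝ)/n), f x
      = (n:ℝ)⁻¹ * ∫ t in (0:ℝ)..1,
          (∑ k ∈ Finset.range n, Real.log (Real.Gamma ((t + k)/n))) * Real.sin (2 * π * t) := by
    rw [Finset.sum_congr rfl (fun k _ => piece k), ← Finset.mul_sum]
    congr 1
    rw [← intervalIntegral.integral_finset_sum]
    · congr 1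
      funext t
      rw [Finset.sum_mul]
    · intro k _
      exact myII n hn k (fun t => Real.sin (2 * π * t)) cont2
  -- apply Gauss multiplication
  obtain ⟨c, hc⟩ := myGaussSum n hn
  have hcong : ∫ t in (0:ℝ)..1,
        (∑ k ∈ Finset.range n, Real.log (Real.Gamma ((t + k)/n))) * Real.sin (2 * π * t)
      = ∫ t in (0:ℝ)..1,
          (Real.log (Real.Gamma t) - t * Real.log n + c) * Real.sin (2 * π * t) := by
    rw [intervalIntegral.integral_of_le zero_le_one, intervalIntegral.integral_of_le zero_le_one]
    apply MeasureTheory.setIntegral_congr_fun measurableSet_Ioc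
    intro t ht
    simp only
    rw [hc t ht.1]
  -- expand the integral
  have hA : IntervalIntegrable (fun t => Real.log (Real.Gamma t) * Real.sin (2 * π * t))
      MeasureTheory.volume 0 1 := by
    have := myII 1 one_pos 0 (fun t => Real.sin (2 * π * t)) cont2
    simpa using this
  have hB : IntervalIntegrable
      (fun t => (- Real.log n) * (t * Real.sin (2 * π * t)) + c * Real.sin (2 * π * t))
      MeasureTheory.volume 0 1 :=
    (Continuous.intervalIntegrable
      ((continuous_const.mul (continuous_id.mul cont2)).add (continuous_const.mul cont2)) _ _)
  have hB1 : IntervalIntegrable (fun t => (- Real.log n) * (t * Real.sin (2 * π * t)))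
      MeasureTheory.volume 0 1 :=
    (Continuous.intervalIntegrable
      (continuous_const.mul (continuous_id'.mul cont2)) _ _)
  have hB2 : IntervalIntegrable (fun t => c * Real.sin (2 * π * t))
      MeasureTheory.volume 0 1 :=
    (Continuous.intervalIntegrable (continuous_const.mul cont2) _ _)
  have hsplit : ∫ t in (0:ℝ)..1,
        (Real.log (Real.Gamma t) - t * Real.log n + c) * Real.sin (2 * π * t)
      = (∫ t in (0:ℝ)..1, Real.log (Real.Gamma t) * Real.sin (2 * π * t))
        + ((- Real.log n) * (∫ t in (0:ℝ)..1, t * Real.sin (2 * π * t))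
          + c * ∫ t in (0:ℝ)..1, Real.sin (2 * π * t)) := by
    have e : ∫ t in (0:ℝ)..1,
          (Real.log (Real.Gamma t) - t * Real.log n + c) * Real.sin (2 * π * t)
        = ∫ t in (0:ℝ)..1, (Real.log (Real.Gamma t) * Real.sin (2 * π * t)
            + ((- Real.log n) * (t * Real.sin (2 * π * t)) + c * Real.sin (2 * π * t))) :=
      intervalIntegral.integral_congr (fun t _ => by ring)
    rw [e, intervalIntegral.integral_add hA (hB1.add hB2),
      intervalIntegral.integral_add hB1 hB2,
      intervalIntegral.integral_const_mul, intervalIntegral.integral_const_mul]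
  have hηdef : ∫ t in (0:ℝ)..1, Real.log (Real.Gamma t) * Real.sin (2 * π * t)
      = fourierEta / 2 := by
    unfold fourierEta
    ring
  rw [← adj, hsum, hcong, hsplit, hηdef, mySin01, myTSin01]
  field_simp
  ring
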